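/- Let A = ℝ[X,Y]/(X³Y, X²Y², Y⁴, X³−Y³) and let φ be an ℝ-algebra automorphism of A with φ(X) ≡ AX + CX² + DXY + EY² and φ(Y) ≡ AY + LX² + MXY + NY² modulo 𝔫³ (A ≠ 0). Then the condition φ(X³ − Y³) = 0 forces M = C. -/

import Mathlib

/-- The Weil algebra `A = ℝ[X,Y]/(X³Y, X²Y², Y⁴, X³−Y³)`. -/
noncomputable abbrev WB : Type :=
  MvPolynomial (Fin 2) ℝ ⧸
    Ideal.span ({(MvPolynomial.X 0 : MvPolynomial (Fin 2) ℝ) ^ 3 * MvPolynomial.X 1,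
      (MvPolynomial.X 0) ^ 2 * (MvPolynomial.X 1) ^ 2, (MvPolynomial.X 1) ^ 4,
      (MvPolynomial.X 0) ^ 3 - (MvPolynomial.X 1) ^ 3} : Set (MvPolynomial (Fin 2) ℝ))

/-- The residue class of `X`. -/
noncomputable def bx : WB := Ideal.Quotient.mk _ (MvPolynomial.X 0)

/-- The residue class of `Y`. -/
noncomputable def bY : WB := Ideal.Quotient.mk _ (MvPolynomial.X 1)

/-- The maximal (nilpotent) ideal `𝔫 = (X, Y)` of `A`. -/
noncomputable def mIdeal : Ideal WB := Ideal.span {bx, bY}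

section Aux

open MvPolynomial Pointwise

private lemma mk_eq_zero_of_mem {p : MvPolynomial (Fin 2) ℝ}
    (hp : p ∈ Ideal.span {(MvPolynomial.X 0 : MvPolynomial (Fin 2) ℝ) ^ 3 * MvPolynomial.X 1,
      (MvPolynomial.X 0) ^ 2 * (MvPolynomial.X 1) ^ 2, (MvPolynomial.X 1) ^ 4,
      (MvPolynomial.X 0) ^ 3 - (MvPolynomial.X 1) ^ 3}) :
    (Ideal.Quotient.mk _ p : WB) = 0 :=
  Ideal.Quotient.eq_zero_iff_mem.mpr hp

private lemma z1 : bx ^ 3 * bY = 0 := by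
  have h := mk_eq_zero_of_mem (Ideal.subset_span (by simp))
    (p := (MvPolynomial.X 0 : MvPolynomial (Fin 2) ℝ) ^ 3 * MvPolynomial.X 1)
  rw [map_mul, map_pow] at h
  exact h

private lemma z2 : bx ^ 2 * bY ^ 2 = 0 := by
  have h := mk_eq_zero_of_mem (Ideal.subset_span (by simp))
    (p := (MvPolynomial.X 0 : MvPolynomial (Fin 2) ℝ) ^ 2 * (MvPolynomial.X 1) ^ 2)
  rw [map_mul, map_pow, map_pow] at h
  exact h

private lemma z3 : bY ^ 4 = 0 := by
  have h := mk_eq_zero_of_mem (Ideal.subset_span (by simp))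
    (p := (MvPolynomial.X 1 : MvPolynomial (Fin 2) ℝ) ^ 4)
  rw [map_pow] at h
  exact h

private lemma z4 : bx ^ 3 = bY ^ 3 := by
  have h := mk_eq_zero_of_mem (Ideal.subset_span (by simp))
    (p := (MvPolynomial.X 0 : MvPolynomial (Fin 2) ℝ) ^ 3 - (MvPolynomial.X 1) ^ 3)
  rw [map_sub, map_pow, map_pow, sub_eq_zero] at h
  exact h

private lemma zx5 : bx ^ 5 = 0 := by linear_combination bx ^ 2 * z4 + bY * z2
private lemma z41 : bx ^ 4 * bY = 0 := by linear_combination bx * bY * z4 + bx * z3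
private lemma z32 : bx ^ 3 * bY ^ 2 = 0 := by linear_combination bY ^ 2 * z4 + bY * z3
private lemma z23 : bx ^ 2 * bY ^ 3 = 0 := by linear_combination bY * z2
private lemma z14 : bx * bY ^ 4 = 0 := by linear_combination bx * z3
private lemma z05 : bY ^ 5 = 0 := by linear_combination bY * z3

private lemma h5 : mIdeal ^ 5 = ⊥ := by
  have hsp : mIdeal ^ 5 = Ideal.span (({bx, bY} : Set WB) ^ 5) :=
    Submodule.span_pow _ 5
  rw [hsp, Ideal.span_eq_bot]
  intro x hx
  have e : (({bx, bY} : Set WB)) ^ 5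
      = {bx, bY} * {bx, bY} * {bx, bY} * {bx, bY} * ({bx, bY} : Set WB) := by
    norm_num [pow_succ]
  rw [e] at hx
  rcases hx with ⟨p, hp, a5, ha5, rfl⟩
  rcases hp with ⟨p, hp, a4, ha4, rfl⟩
  rcases hp with ⟨p, hp, a3, ha3, rfl⟩
  rcases hp with ⟨a1, ha1, a2, ha2, rfl⟩
  simp only [Set.mem_insert_iff, Set.mem_singleton_iff] at ha1 ha2 ha3 ha4 ha5
  rcases ha1 with rfl | rfl <;> rcases ha2 with rfl | rfl <;> rcases ha3 with rfl | rfl <;>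
    rcases ha4 with rfl | rfl <;> rcases ha5 with rfl | rfl <;>
    first
      | linear_combination zx5
      | linear_combination z41
      | linear_combination z32
      | linear_combination z23
      | linear_combination z14
      | linear_combination z05

private lemma key5 {a : WB} (ha : a ∈ mIdeal ^ 5) : a = 0 := by
  rw [h5] at ha; simpa using ha

private lemma hbx : bx ∈ mIdeal := Ideal.subset_span (by simp)
private lemma hbY : bY ∈ mIdeal := Ideal.subset_span (by simp)

/-- The linear functional `p ↦ coeff X⁴ p + coeff XY³ p` kills the defining ideal. -/
private lemma lam_vanish {p : MvPolynomial (Fin 2) ℝ}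
    (hp : p ∈ Ideal.span {(MvPolynomial.X 0 : MvPolynomial (Fin 2) ℝ) ^ 3 * MvPolynomial.X 1,
      (MvPolynomial.X 0) ^ 2 * (MvPolynomial.X 1) ^ 2, (MvPolynomial.X 1) ^ 4,
      (MvPolynomial.X 0) ^ 3 - (MvPolynomial.X 1) ^ 3}) :
    coeff (Finsupp.single 0 4) p + coeff (Finsupp.single 0 1 + Finsupp.single 1 3) p = 0 := by
  set m1 : Fin 2 →₀ ℕ := Finsupp.single 0 4 with hm1
  set m2 : Fin 2 →₀ ℕ := Finsupp.single 0 1 + Finsupp.single 1 3 with hm2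
  have main : ∀ q : MvPolynomial (Fin 2) ℝ,
      ∀ g ∈ ({(MvPolynomial.X 0 : MvPolynomial (Fin 2) ℝ) ^ 3 * MvPolynomial.X 1,
        (MvPolynomial.X 0) ^ 2 * (MvPolynomial.X 1) ^ 2, (MvPolynomial.X 1) ^ 4,
        (MvPolynomial.X 0) ^ 3 - (MvPolynomial.X 1) ^ 3} : Set (MvPolynomial (Fin 2) ℝ)),
      coeff m1 (q * g) + coeff m2 (q * g) = 0 := by
    intro q g hg
    simp only [Set.mem_insert_iff, Set.mem_singleton_iff] at hg
    have e1 : (MvPolynomial.X 0 : MvPolynomial (Fin 2) ℝ) ^ 3 * MvPolynomial.X 1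
        = monomial (Finsupp.single 0 3 + Finsupp.single 1 1) 1 := by
      rw [X_pow_eq_monomial, X, monomial_mul, mul_one]
    have e2 : (MvPolynomial.X 0 : MvPolynomial (Fin 2) ℝ) ^ 2 * (MvPolynomial.X 1) ^ 2
        = monomial (Finsupp.single 0 2 + Finsupp.single 1 2) 1 := by
      rw [X_pow_eq_monomial, X_pow_eq_monomial, monomial_mul, mul_one]
    have e3 : (MvPolynomial.X 1 : MvPolynomial (Fin 2) ℝ) ^ 4
        = monomial (Finsupp.single 1 4) 1 := X_pow_eq_monomial
    have e4 : (MvPolynomial.X 0 : MvPolynomial (Fin 2) ℝ) ^ 3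
        = monomial (Finsupp.single 0 3) 1 := X_pow_eq_monomial
    have e5 : (MvPolynomial.X 1 : MvPolynomial (Fin 2) ℝ) ^ 3
        = monomial (Finsupp.single 1 3) 1 := X_pow_eq_monomial
    rcases hg with rfl | rfl | rfl | rfl
    · rw [e1, coeff_mul_monomial', coeff_mul_monomial']
      rw [if_neg, if_neg]
      · ring
      · intro h
        have := h 0
        simp [hm2, Finsupp.single_apply] at this
      · intro h
        have := h 1
        simp [hm1, Finsupp.single_apply] at this
    · rw [e2, coeff_mul_monomial', coeff_mul_monomial']
      rw [if_neg, if_neg]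
      · ring
      · intro h
        have := h 0
        simp [hm2, Finsupp.single_apply] at this
      · intro h
        have := h 1
        simp [hm1, Finsupp.single_apply] at this
    · rw [e3, coeff_mul_monomial', coeff_mul_monomial']
      rw [if_neg, if_neg]
      · ring
      · intro h
        have := h 1
        simp [hm2, Finsupp.single_apply] at this
      · intro h
        have := h 1
        simp [hm1, Finsupp.single_apply] at this
    · rw [mul_sub, e4, e5, coeff_sub, coeff_sub,
        coeff_mul_monomial', coeff_mul_monomial', coeff_mul_monomial', coeff_mul_monomial']
      rw [if_pos, if_neg, if_neg, if_pos]
      · have d1 : m1 - Finsupp.single 0 3 = Finsupp.single 0 1 := by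
          ext i
          fin_cases i <;> simp [hm1, Finsupp.single_apply]
        have d2 : m2 - Finsupp.single 1 3 = Finsupp.single 0 1 := by
          ext i
          fin_cases i <;> simp [hm2, Finsupp.single_apply]
        rw [d1, d2]; ring
      · intro i
        fin_cases i <;> simp [hm2, Finsupp.single_apply]
      · intro h
        have := h 0
        simp [hm2, Finsupp.single_apply] at this
      · intro h
        have := h 1
        simp [hm1, Finsupp.single_apply] at this
      · intro i
        fin_cases i <;> simp [hm1, Finsupp.single_apply]
  have H : ∀ q : MvPolynomial (Fin 2) ℝ, coeff m1 (q * p) + coeff m2 (q * p) = 0 := by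
    refine Submodule.span_induction (p := fun x _ => ∀ q : MvPolynomial (Fin 2) ℝ,
        coeff m1 (q * x) + coeff m2 (q * x) = 0) ?_ ?_ ?_ ?_ hp
    · intro g hg q; exact main q g hg
    · intro q; simp
    · intro x y _ _ hx hy q
      rw [mul_add, coeff_add, coeff_add]
      have h1 := hx q; have h2 := hy q
      linarith
    · intro r x _ hx q
      have h1 := hx (q * r)
      rw [smul_eq_mul, ← mul_assoc]
      exact h1
  simpa using H 1

/-- `XY³ ≠ 0` in `WB`. -/
private lemma hne : bx * bY ^ 3 ≠ 0 := by
  intro h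
  have hm : (MvPolynomial.X 0 : MvPolynomial (Fin 2) ℝ) * (MvPolynomial.X 1) ^ 3
      ∈ Ideal.span {(MvPolynomial.X 0 : MvPolynomial (Fin 2) ℝ) ^ 3 * MvPolynomial.X 1,
      (MvPolynomial.X 0) ^ 2 * (MvPolynomial.X 1) ^ 2, (MvPolynomial.X 1) ^ 4,
      (MvPolynomial.X 0) ^ 3 - (MvPolynomial.X 1) ^ 3} := by
    rw [← Ideal.Quotient.eq_zero_iff_mem]
    rw [map_mul, map_pow]
    exact h
  have := lam_vanish hm
  have em : (MvPolynomial.X 0 : MvPolynomial (Fin 2) ℝ) * (MvPolynomial.X 1) ^ 3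
      = monomial (Finsupp.single 0 1 + Finsupp.single 1 3) 1 := by
    rw [X_pow_eq_monomial, X, monomial_mul, mul_one]
  rw [em, coeff_monomial, coeff_monomial, if_pos rfl, if_neg] at this
  · norm_num at this
  · intro hcontra
    have := DFunLike.congr_fun hcontra 1
    simp [Finsupp.single_apply] at this

end Aux

set_option maxHeartbeats 2000000 in
set_option synthInstance.maxHeartbeats 1000000 in
/-- If an ℝ-algebra automorphism `φ` of `A = ℝ[X,Y]/(X³Y, X²Y², Y⁴, X³−Y³)` satisfies
`φ(X) ≡ AX + CX² + DXY + EY²` and `φ(Y) ≡ AY + LX² + MXY + NY²` modulo `𝔫³`, with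
`A ≠ 0`, then (since `φ(X³ − Y³) = 0` in `A`) necessarily `M = C`. -/
theorem stmt15 (φ : WB ≃ₐ[ℝ] WB) (A C D E L M N : ℝ) (hA : A ≠ 0)
    (hX : φ bx - (A • bx + C • bx ^ 2 + D • (bx * bY) + E • bY ^ 2) ∈ mIdeal ^ 3)
    (hY : φ bY - (A • bY + L • bx ^ 2 + M • (bx * bY) + N • bY ^ 2) ∈ mIdeal ^ 3) :
    M = C := by
  set a : WB := algebraMap ℝ WB A with ha
  set c : WB := algebraMap ℝ WB C with hc
  set d : WB := algebraMap ℝ WB D with hd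
  set e : WB := algebraMap ℝ WB E with he
  set l : WB := algebraMap ℝ WB L with hl
  set m : WB := algebraMap ℝ WB M with hm
  set n : WB := algebraMap ℝ WB N with hn
  set P : WB := A • bx + C • bx ^ 2 + D • (bx * bY) + E • bY ^ 2 with hPdef
  set Q : WB := A • bY + L • bx ^ 2 + M • (bx * bY) + N • bY ^ 2 with hQdef
  have smul_eq : ∀ (r : ℝ) (x : WB), r • x = algebraMap ℝ WB r * x := fun r x => by
    rw [← algebraMap_smul (A := WB) r x, smul_eq_mul]
  have hPalg : P = a * bx + c * bx ^ 2 + d * (bx * bY) + e * bY ^ 2 := by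
    rw [hPdef, ha, hc, hd, he, smul_eq, smul_eq, smul_eq, smul_eq]
  have hQalg : Q = a * bY + l * bx ^ 2 + m * (bx * bY) + n * bY ^ 2 := by
    rw [hQdef, ha, hl, hm, hn, smul_eq, smul_eq, smul_eq, smul_eq]
  -- memberships
  have hPm : P ∈ mIdeal := by
    rw [hPalg]
    refine add_mem (add_mem (add_mem ?_ ?_) ?_) ?_
    · exact Ideal.mul_mem_left _ _ hbx
    · exact Ideal.mul_mem_left _ _ (Ideal.pow_mem_of_mem _ hbx 2 (by norm_num))
    · exact Ideal.mul_mem_left _ _ (Ideal.mul_mem_left _ _ hbY)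
    · exact Ideal.mul_mem_left _ _ (Ideal.pow_mem_of_mem _ hbY 2 (by norm_num))
  have hQm : Q ∈ mIdeal := by
    rw [hQalg]
    refine add_mem (add_mem (add_mem ?_ ?_) ?_) ?_
    · exact Ideal.mul_mem_left _ _ hbY
    · exact Ideal.mul_mem_left _ _ (Ideal.pow_mem_of_mem _ hbx 2 (by norm_num))
    · exact Ideal.mul_mem_left _ _ (Ideal.mul_mem_left _ _ hbY)
    · exact Ideal.mul_mem_left _ _ (Ideal.pow_mem_of_mem _ hbY 2 (by norm_num))
  -- the cube of an element P + r with r ∈ 𝔫³ equals P³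
  have cube_eq : ∀ (T : WB), T ∈ mIdeal → ∀ (r : WB), r ∈ mIdeal ^ 3 →
      (T + r) ^ 3 = T ^ 3 := by
    intro T hT r hr
    have h1 : T ^ 2 * r = 0 := by
      apply key5
      have : T ^ 2 * r ∈ mIdeal ^ 2 * mIdeal ^ 3 :=
        Ideal.mul_mem_mul (Ideal.pow_mem_pow hT 2) hr
      rwa [← pow_add] at this
    have h2 : T * r ^ 2 = 0 := by
      apply key5
      have h7 : T * r ^ 2 ∈ mIdeal ^ 1 * (mIdeal ^ 3) ^ 2 :=
        Ideal.mul_mem_mul (by simpa using hT) (Ideal.pow_mem_pow hr 2)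
      rw [← pow_mul, ← pow_add] at h7
      exact Ideal.pow_le_pow_right (by norm_num) h7
    have h3 : r ^ 3 = 0 := by
      apply key5
      have h7 : r ^ 3 ∈ (mIdeal ^ 3) ^ 3 := Ideal.pow_mem_pow hr 3
      rw [← pow_mul] at h7
      exact Ideal.pow_le_pow_right (by norm_num) h7
    have expand : (T + r) ^ 3 = T ^ 3 + T ^ 2 * r * 3 + T * r ^ 2 * 3 + r ^ 3 := by ring
    rw [expand, h1, h2, h3]
    ring
  have huP : φ bx = P + (φ bx - P) := by ring
  have huQ : φ bY = Q + (φ bY - Q) := by ring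
  have hcubeX : (φ bx) ^ 3 = P ^ 3 := by
    rw [huP]; exact cube_eq P hPm _ hX
  have hcubeY : (φ bY) ^ 3 = Q ^ 3 := by
    rw [huQ]; exact cube_eq Q hQm _ hY
  -- φ(X)³ = φ(Y)³ since X³ = Y³
  have hPQ : P ^ 3 = Q ^ 3 := by
    rw [← hcubeX, ← hcubeY, ← map_pow, ← map_pow, z4]
  -- normal forms of the cubes
  have lemP : P ^ 3 = a ^ 3 * bY ^ 3 + 3 * a ^ 2 * c * (bx * bY ^ 3) := by
    rw [hPalg]
    linear_combination
      (3*a^2*e + 6*a*d*e*bY + 3*a*c^2*bY) * z2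
      + (3*a^2*d + 3*a*d^2*bY + 6*a*c*e*bY + e^3*bY^2 + d^3*bY^2 + 6*c*d*e*bY^2 + c^3*bY^2
          + 3*a*e^2*bx + 6*a*c*d*bx + 3*d*e^2*bx*bY + 3*c*d^2*bx*bY + 3*c^2*e*bx*bY
          + 3*d^2*e*bx^2 + 3*c*e^2*bx^2 + 3*c^2*d*bx^2) * z3
      + (a^3 + 3*a^2*d*bY + 3*a*d^2*bY^2 + 6*a*c*e*bY^2 + d^3*bY^3 + 6*c*d*e*bY^3 + c^3*bY^3
          + 3*a^2*c*bx + 6*a*c*d*bx*bY + 3*c*d^2*bx*bY^2 + 3*c^2*e*bx*bY^2 + 3*a*c^2*bx^2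
          + 3*c^2*d*bx^2*bY + c^3*bx^3) * z4
  have lemQ : Q ^ 3 = a ^ 3 * bY ^ 3 + 3 * a ^ 2 * m * (bx * bY ^ 3) := by
    rw [hQalg]
    linear_combination
      (3*a^2*l + 3*a*m^2*bY + 6*a*l*n*bY) * z2
      + (3*a^2*n + 3*a*n^2*bY + 6*a*l*m*bY + n^3*bY^2 + m^3*bY^2 + 6*l*m*n*bY^2 + l^3*bY^2
          + 6*a*m*n*bx + 3*a*l^2*bx + 3*m*n^2*bx*bY + 3*l*m^2*bx*bY + 3*l^2*n*bx*bY
          + 3*m^2*n*bx^2 + 3*l*n^2*bx^2 + 3*l^2*m*bx^2) * z3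
      + (6*a*l*m*bY^2 + m^3*bY^3 + 6*l*m*n*bY^3 + l^3*bY^3 + 3*a*l^2*bx*bY
          + 3*l*m^2*bx*bY^2 + 3*l^2*n*bx*bY^2 + 3*l^2*m*bx^2*bY + l^3*bx^3) * z4
  have heq : (3 * A ^ 2 * (C - M)) • (bx * bY ^ 3) = 0 := by
    rw [smul_eq, map_mul, map_mul, map_sub, map_pow, map_ofNat, ← ha, ← hc, ← hm]
    linear_combination lemQ - lemP + hPQ
  rcases smul_eq_zero.mp heq with h | h
  · have h3 : (3 : ℝ) * A ^ 2 ≠ 0 := mul_ne_zero three_ne_zero (pow_ne_zero 2 hA)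
    have : C - M = 0 := (mul_eq_zero.mp h).resolve_left h3
    linarith
  · exact absurd h hne
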